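/- For real numbers 0 < x₁ ≤ x₂ ≤ 1 and 0 ≤ y₂ ≤ y₁ ≤ 1, we have −(y₁·log x₁ + y₂·log x₂) ≥ −(y₁ + y₂)·log((x₁ + x₂)/2). -/
import Mathlib

theorem stmt_0 (x₁ x₂ y₁ y₂ : ℝ) (hx1 : 0 < x₁) (hx12 : x₁ ≤ x₂) (hx2 : x₂ ≤ 1)
    (hy2 : 0 ≤ y₂) (hy21 : y₂ ≤ y₁) (hy1 : y₁ ≤ 1) :
    -(y₁ * Real.log x₁ + y₂ * Real.log x₂) ≥ -((y₁ + y₂) * Real.log ((x₁ + x₂) / 2)) := by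
  have hm : (0:ℝ) < (x₁ + x₂) / 2 := by linarith
  have hx2pos : (0:ℝ) < x₂ := lt_of_lt_of_le hx1 hx12
  have h1 : Real.log x₂ ≥ Real.log ((x₁ + x₂) / 2) :=
    Real.log_le_log hm (by linarith)
  have h2 : Real.log x₁ + Real.log x₂ ≤ 2 * Real.log ((x₁ + x₂) / 2) := by
    have hsq : x₁ * x₂ ≤ ((x₁ + x₂) / 2) ^ 2 := by nlinarith [sq_nonneg (x₁ - x₂)]
    have := Real.log_le_log (by positivity) hsq
    rw [Real.log_mul (ne_of_gt hx1) (ne_of_gt hx2pos)] at this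
    rw [Real.log_pow] at this
    push_cast at this
    linarith
  nlinarith [mul_le_mul hy21 (by linarith : Real.log x₂ - Real.log ((x₁ + x₂) / 2) ≤ Real.log ((x₁ + x₂) / 2) - Real.log x₁) (by linarith) (by linarith : (0:ℝ) ≤ y₁)]
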